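/- arXiv:1211.0863 — 3 statements merged into one kernel-verified Lean document; each statement's English description precedes it below -/
import Mathlib

section
/- The probability space 𝕋 with Haar measure is isomorphic (as a measure space) to the one-sided Bernoulli shift space ∏_{n ∈ ℤ₋} {0,1,…,k−1} with the uniform product measure, via the map sending (x_n)_{n ∈ ℤ₋} to exp(2πi Σ_{n ∈ ℤ₋} x_n k^n); moreover, under this isomorphism the preimage of a set under T_k corresponds to the shift of the set. -/
open MeasureTheory

noncomputable instance : MeasurableSpace Circle := borel Circle

instance : BorelSpace Circle := ⟨rfl⟩


namespace CBA

open Set Real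

variable {k : ℕ}

/-- The base-`k` expansion sum. -/
noncomputable def bS (k : ℕ) (x : ℕ → Fin k) : ℝ :=
  ∑' n : ℕ, (x n : ℝ) * (k : ℝ)⁻¹ ^ (n + 1)

/-- Value of the first `N` digits as a natural number (big-endian). -/
def bval (x : ℕ → Fin k) : ℕ → ℕ
  | 0 => 0
  | N + 1 => k * bval x N + (x N : ℕ)

lemma summable_term (hk : 2 ≤ k) (x : ℕ → Fin k) :
    Summable (fun n => (x n : ℝ) * (k : ℝ)⁻¹ ^ (n + 1)) := by
  have hk0 : (0:ℝ) < k := by positivity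
  refine Summable.of_nonneg_of_le (fun n => by positivity) (fun n => ?_)
    (summable_geometric_of_lt_one (by positivity) (by
      rw [inv_lt_one_iff₀]; right; exact_mod_cast hk : (k:ℝ)⁻¹ < 1))
  have h1 : (x n : ℝ) ≤ k := by
    have := (x n).isLt; exact_mod_cast this.le
  calc (x n : ℝ) * (k : ℝ)⁻¹ ^ (n + 1) ≤ (k : ℝ) * (k : ℝ)⁻¹ ^ (n + 1) := by
        apply mul_le_mul_of_nonneg_right h1 (by positivity)
    _ = (k : ℝ)⁻¹ ^ n := by
        rw [pow_succ']; field_simp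

lemma partial_eq (hk : 2 ≤ k) (x : ℕ → Fin k) (N : ℕ) :
    ∑ n ∈ Finset.range N, (x n : ℝ) * (k : ℝ)⁻¹ ^ (n + 1) = (bval x N : ℝ) / (k : ℝ) ^ N := by
  have hk0 : (0:ℝ) < k := by positivity
  induction N with
  | zero => simp [bval]
  | succ N ih =>
    rw [Finset.sum_range_succ, ih]
    show _ = ((k * bval x N + (x N : ℕ) : ℕ) : ℝ) / _
    push_cast
    rw [inv_pow]
    field_simp
    ring

lemma geom_eq (hk : 2 ≤ k) (N : ℕ) :
    ∑' i : ℕ, (((k:ℝ) - 1) * (k : ℝ)⁻¹ ^ (N + 1)) * (k : ℝ)⁻¹ ^ i = (k : ℝ)⁻¹ ^ N := by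
  have hk0 : (0:ℝ) < k := by positivity
  have hk1 : (1:ℝ) ≤ k := by exact_mod_cast (le_trans one_le_two hk)
  have hr1 : (k:ℝ)⁻¹ < 1 := by rw [inv_lt_one_iff₀]; right; exact_mod_cast hk
  rw [tsum_mul_left, tsum_geometric_of_lt_one (by positivity) hr1]
  have hkne : (k:ℝ) ≠ 0 := hk0.ne'
  have hk1' : (k:ℝ) - 1 ≠ 0 := by
    have : (2:ℝ) ≤ k := by exact_mod_cast hk
    linarith
  have h1 : (1 - (k:ℝ)⁻¹) = ((k:ℝ)-1)/k := by field_simp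
  rw [h1, inv_div, pow_succ]
  field_simp

lemma term_le (hk : 2 ≤ k) (x : ℕ → Fin k) (N i : ℕ) :
    (x (i + N) : ℝ) * (k : ℝ)⁻¹ ^ (i + N + 1) ≤ (((k:ℝ) - 1) * (k : ℝ)⁻¹ ^ (N + 1)) * (k : ℝ)⁻¹ ^ i := by
  have hk0 : (0:ℝ) < k := by positivity
  have h1 : (x (i+N) : ℝ) ≤ (k:ℝ) - 1 := by
    have := (x (i+N)).isLt
    have : (x (i+N) : ℕ) ≤ k - 1 := by omega
    have h2 := Nat.cast_le (α := ℝ) |>.mpr this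
    push_cast [Nat.cast_sub (by omega : 1 ≤ k)] at h2
    exact h2
  calc (x (i + N) : ℝ) * (k : ℝ)⁻¹ ^ (i + N + 1)
      ≤ ((k:ℝ) - 1) * (k : ℝ)⁻¹ ^ (i + N + 1) := by
        apply mul_le_mul_of_nonneg_right h1 (by positivity)
    _ = (((k:ℝ) - 1) * (k : ℝ)⁻¹ ^ (N + 1)) * (k : ℝ)⁻¹ ^ i := by ring

lemma bS_split (hk : 2 ≤ k) (x : ℕ → Fin k) (N : ℕ) :
    bS k x = (bval x N : ℝ) / (k : ℝ) ^ N + ∑' i : ℕ, (x (i + N) : ℝ) * (k : ℝ)⁻¹ ^ (i + N + 1) := by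
  rw [bS, ← Summable.sum_add_tsum_nat_add N (summable_term hk x), partial_eq hk x N]

lemma tail_summable (hk : 2 ≤ k) (x : ℕ → Fin k) (N : ℕ) :
    Summable (fun i : ℕ => (x (i + N) : ℝ) * (k : ℝ)⁻¹ ^ (i + N + 1)) :=
  ((summable_term hk x).comp_injective (add_left_injective N)).congr (fun i => rfl)

lemma tail_nonneg (hk : 2 ≤ k) (x : ℕ → Fin k) (N : ℕ) :
    0 ≤ ∑' i : ℕ, (x (i + N) : ℝ) * (k : ℝ)⁻¹ ^ (i + N + 1) :=
  tsum_nonneg (fun i => by positivity)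

lemma tail_le (hk : 2 ≤ k) (x : ℕ → Fin k) (N : ℕ) :
    ∑' i : ℕ, (x (i + N) : ℝ) * (k : ℝ)⁻¹ ^ (i + N + 1) ≤ (k : ℝ)⁻¹ ^ N := by
  rw [← geom_eq hk N]
  refine Summable.tsum_le_tsum (term_le hk x N) (tail_summable hk x N) ?_
  exact (summable_geometric_of_lt_one (by positivity) (by
    rw [inv_lt_one_iff₀]; right; exact_mod_cast hk)).mul_left _

lemma tail_lt (hk : 2 ≤ k) (x : ℕ → Fin k) (N : ℕ)
    (h : ∃ m, ((x (m + N) : ℕ) + 1 < k)) :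
    ∑' i : ℕ, (x (i + N) : ℝ) * (k : ℝ)⁻¹ ^ (i + N + 1) < (k : ℝ)⁻¹ ^ N := by
  obtain ⟨m, hm⟩ := h
  rw [← geom_eq hk N]
  refine Summable.tsum_lt_tsum (i := m) (term_le hk x N) ?_ (tail_summable hk x N) ?_
  · show (x (m + N) : ℝ) * (k : ℝ)⁻¹ ^ (m + N + 1) < _
    have hk0 : (0:ℝ) < k := by positivity
    have h1 : (x (m+N) : ℝ) < (k:ℝ) - 1 := by
      have : ((x (m+N) : ℕ) : ℝ) + 1 < (k : ℝ) := by exact_mod_cast hm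
      linarith
    calc (x (m + N) : ℝ) * (k : ℝ)⁻¹ ^ (m + N + 1)
        < ((k:ℝ) - 1) * (k : ℝ)⁻¹ ^ (m + N + 1) := by
          apply mul_lt_mul_of_pos_right h1 (by positivity)
      _ = (((k:ℝ) - 1) * (k : ℝ)⁻¹ ^ (N + 1)) * (k : ℝ)⁻¹ ^ m := by ring
  · exact (summable_geometric_of_lt_one (by positivity) (by
      rw [inv_lt_one_iff₀]; right; exact_mod_cast hk)).mul_left _

lemma bS_lower (hk : 2 ≤ k) (x : ℕ → Fin k) (N : ℕ) :
    (bval x N : ℝ) / (k : ℝ) ^ N ≤ bS k x := by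
  rw [bS_split hk x N]
  linarith [tail_nonneg hk x N]

lemma bS_upper (hk : 2 ≤ k) (x : ℕ → Fin k) (N : ℕ) :
    bS k x ≤ ((bval x N : ℝ) + 1) / (k : ℝ) ^ N := by
  have hk0 : (0:ℝ) < k := by positivity
  rw [bS_split hk x N]
  have := tail_le hk x N
  have h2 : (k : ℝ)⁻¹ ^ N = 1 / (k:ℝ) ^ N := by rw [inv_pow]; exact inv_eq_one_div _
  rw [h2] at this
  rw [add_div]
  linarith

lemma bS_upper_strict (hk : 2 ≤ k) (x : ℕ → Fin k) (N : ℕ)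
    (h : ∃ m, ((x (m + N) : ℕ) + 1 < k)) :
    bS k x < ((bval x N : ℝ) + 1) / (k : ℝ) ^ N := by
  have hk0 : (0:ℝ) < k := by positivity
  rw [bS_split hk x N]
  have := tail_lt hk x N h
  have h2 : (k : ℝ)⁻¹ ^ N = 1 / (k:ℝ) ^ N := by rw [inv_pow]; exact inv_eq_one_div _
  rw [h2] at this
  rw [add_div]
  linarith

lemma bS_nonneg (hk : 2 ≤ k) (x : ℕ → Fin k) : 0 ≤ bS k x := by
  have := bS_lower hk x 0
  simpa [bval] using this

lemma bS_le_one (hk : 2 ≤ k) (x : ℕ → Fin k) : bS k x ≤ 1 := by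
  have := bS_upper hk x 0
  simpa [bval] using this


lemma bval_lt (hk : 2 ≤ k) (x : ℕ → Fin k) (N : ℕ) : bval x N < k ^ N := by
  induction N with
  | zero => simp [bval]
  | succ N ih =>
    have hx := (x N).isLt
    have : k * bval x N + (x N : ℕ) ≤ k * (k ^ N - 1) + (k - 1) := by
      have : bval x N ≤ k ^ N - 1 := by omega
      have h2 : k * bval x N ≤ k * (k ^ N - 1) := Nat.mul_le_mul_left k this
      omega
    have hkN : 1 ≤ k ^ N := Nat.one_le_pow _ _ (by omega)
    show k * bval x N + (x N : ℕ) < k ^ (N + 1)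
    rw [pow_succ]
    calc k * bval x N + (x N : ℕ) ≤ k * (k ^ N - 1) + (k - 1) := this
      _ < k ^ N * k := by
        rw [Nat.mul_sub, Nat.mul_comm k (k ^ N)]
        have : k ≤ k ^ N * k := Nat.le_mul_of_pos_left k (by omega)
        omega

lemma bval_congr {x y : ℕ → Fin k} {N : ℕ} (h : ∀ n < N, x n = y n) :
    bval x N = bval y N := by
  induction N with
  | zero => rfl
  | succ N ih =>
    show k * bval x N + (x N : ℕ) = k * bval y N + (y N : ℕ)
    rw [ih (fun n hn => h n (by omega)), h N (by omega)]

lemma bval_inj (hk : 2 ≤ k) {x y : ℕ → Fin k} {N : ℕ} (h : bval x N = bval y N) :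
    ∀ n < N, x n = y n := by
  induction N with
  | zero => omega
  | succ N ih =>
    have hE : k * bval x N + (x N : ℕ) = k * bval y N + (y N : ℕ) := h
    have hx := (x N).isLt
    have hy := (y N).isLt
    have hmod : (x N : ℕ) = (y N : ℕ) := by
      have h1 : (k * bval x N + (x N : ℕ)) % k = (x N : ℕ) := by
        rw [Nat.mul_add_mod, Nat.mod_eq_of_lt hx]
      have h2 : (k * bval y N + (y N : ℕ)) % k = (y N : ℕ) := by
        rw [Nat.mul_add_mod, Nat.mod_eq_of_lt hy]
      rw [← h1, ← h2, hE]
    have hdiv : bval x N = bval y N := by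
      have h3 : k * bval x N = k * bval y N := by omega
      exact Nat.eq_of_mul_eq_mul_left (by omega) h3
    intro n hn
    rcases Nat.lt_succ_iff_lt_or_eq.mp hn with hn | rfl
    · exact ih hdiv n hn
    · exact Fin.ext hmod

lemma bval_surj (hk : 2 ≤ k) (N : ℕ) (c : ℕ) (hc : c < k ^ N) :
    ∃ x : ℕ → Fin k, bval x N = c := by
  induction N generalizing c with
  | zero =>
    rw [pow_zero] at hc
    refine ⟨fun _ => ⟨0, by omega⟩, ?_⟩
    simp only [bval]
    omega
  | succ N ih =>
    have hk0 : 0 < k := by omega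
    have hdiv : c / k < k ^ N := by
      rw [Nat.div_lt_iff_lt_mul hk0]
      rw [pow_succ] at hc
      exact hc
    obtain ⟨x, hx⟩ := ih (c / k) hdiv
    refine ⟨fun n => if n = N then ⟨c % k, Nat.mod_lt _ hk0⟩ else x n, ?_⟩
    show k * bval _ N + _ = c
    have h1 : bval (fun n => if n = N then (⟨c % k, Nat.mod_lt _ hk0⟩ : Fin k) else x n) N
        = bval x N := bval_congr (fun n hn => by simp [Nat.ne_of_lt hn])
    simp only [h1, hx, if_pos rfl]
    exact Nat.div_add_mod c k

/-- digit extraction map -/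
noncomputable def bD (k : ℕ) (hk : 2 ≤ k) (t : ℝ) (n : ℕ) : Fin k :=
  ⟨⌊t * (k : ℝ) ^ (n + 1)⌋₊ % k, Nat.mod_lt _ (by omega)⟩

lemma bval_bD (hk : 2 ≤ k) {t : ℝ} (ht : 0 ≤ t) (ht1 : t < 1) (N : ℕ) :
    bval (bD k hk t) N = ⌊t * (k : ℝ) ^ N⌋₊ := by
  have hk0 : (0:ℝ) < k := by positivity
  induction N with
  | zero =>
    simp only [bval, pow_zero, mul_one]
    exact (Nat.floor_eq_zero.mpr ht1).symm
  | succ N ih =>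
    show k * bval (bD k hk t) N + (bD k hk t N : ℕ) = _
    rw [ih]
    show k * ⌊t * (k:ℝ) ^ N⌋₊ + ⌊t * (k : ℝ) ^ (N + 1)⌋₊ % k = ⌊t * (k:ℝ) ^ (N+1)⌋₊
    have hdiv : ⌊t * (k : ℝ) ^ (N + 1)⌋₊ / k = ⌊t * (k:ℝ) ^ N⌋₊ := by
      rw [← Nat.floor_div_natCast]
      congr 1
      rw [pow_succ]
      field_simp
    rw [← hdiv]
    exact Nat.div_add_mod _ k

lemma abs_sub_le_of_squeeze {p t lo w : ℝ} (h1 : lo ≤ p) (h2 : p ≤ lo + w)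
    (h3 : lo ≤ t) (h4 : t ≤ lo + w) : |p - t| ≤ w := by
  rw [abs_le]; constructor <;> linarith

lemma eq_of_dist_le_pow (hk : 2 ≤ k) {p t : ℝ}
    (h : ∀ N : ℕ, |p - t| ≤ (k : ℝ)⁻¹ ^ N) : p = t := by
  have hk0 : (0:ℝ) < k := by positivity
  have hr1 : (k:ℝ)⁻¹ < 1 := by
    rw [inv_lt_one_iff₀]; right; exact_mod_cast hk
  have htend : Filter.Tendsto (fun N : ℕ => (k:ℝ)⁻¹ ^ N) Filter.atTop (nhds 0) :=
    tendsto_pow_atTop_nhds_zero_of_lt_one (by positivity) hr1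
  have : |p - t| ≤ 0 := ge_of_tendsto' htend h
  have := abs_nonneg (p - t)
  have : |p - t| = 0 := le_antisymm ‹|p - t| ≤ 0› ‹0 ≤ |p - t|›
  rw [abs_eq_zero, sub_eq_zero] at this
  exact this

lemma bS_bD (hk : 2 ≤ k) {t : ℝ} (ht : 0 ≤ t) (ht1 : t < 1) :
    bS k (bD k hk t) = t := by
  have hk0 : (0:ℝ) < k := by positivity
  refine eq_of_dist_le_pow hk (fun N => ?_)
  have hkN : (0:ℝ) < (k:ℝ) ^ N := by positivity
  set c : ℕ := ⌊t * (k : ℝ) ^ N⌋₊ with hc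
  have hval := bval_bD hk ht ht1 N
  have hlo := bS_lower hk (bD k hk t) N
  have hhi := bS_upper hk (bD k hk t) N
  rw [hval] at hlo hhi
  have hfl : (c : ℝ) ≤ t * (k:ℝ) ^ N := Nat.floor_le (by positivity)
  have hfl2 : t * (k:ℝ) ^ N < (c : ℝ) + 1 := Nat.lt_floor_add_one _
  have hw : ((c:ℝ) + 1) / (k:ℝ) ^ N = (c:ℝ) / (k:ℝ)^N + (k:ℝ)⁻¹ ^ N := by
    rw [add_div, inv_pow]
    congr 1
    exact (one_div _)
  refine abs_sub_le_of_squeeze hlo ?_ ?_ ?_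
  · rw [← hw]; exact hhi
  · exact (div_le_iff₀ hkN).mpr (by linarith)
  · rw [← hw]; exact (le_div_iff₀ hkN).mpr (by linarith)


lemma bD_bS (hk : 2 ≤ k) (x : ℕ → Fin k)
    (hx : ∀ N : ℕ, ∃ m, (x (m + N) : ℕ) + 1 < k) :
    bD k hk (bS k x) = x := by
  have hk0 : (0:ℝ) < k := by positivity
  funext n
  apply Fin.ext
  show ⌊bS k x * (k : ℝ) ^ (n + 1)⌋₊ % k = (x n : ℕ)
  have hkN : (0:ℝ) < (k:ℝ) ^ (n+1) := by positivity
  have hlo := bS_lower hk x (n+1)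
  have hhi := bS_upper_strict hk x (n+1) (hx (n+1))
  have hfloor : ⌊bS k x * (k : ℝ) ^ (n + 1)⌋₊ = bval x (n+1) := by
    rw [Nat.floor_eq_iff (mul_nonneg (bS_nonneg hk x) hkN.le)]
    constructor
    · rw [div_le_iff₀ hkN] at hlo; linarith
    · rw [lt_div_iff₀ hkN] at hhi; linarith
  rw [hfloor]
  show (k * bval x n + (x n : ℕ)) % k = (x n : ℕ)
  rw [Nat.mul_add_mod, Nat.mod_eq_of_lt (x n).isLt]

lemma bS_lt_one (hk : 2 ≤ k) (x : ℕ → Fin k)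
    (hx : ∃ m, (x (m + 0) : ℕ) + 1 < k) : bS k x < 1 := by
  have := bS_upper_strict hk x 0 hx
  simpa [bval] using this

lemma continuous_bS (hk : 2 ≤ k) : Continuous (bS k) := by
  have hk0 : (0:ℝ) < k := by positivity
  have hr1 : (k:ℝ)⁻¹ < 1 := by rw [inv_lt_one_iff₀]; right; exact_mod_cast hk
  refine continuous_tsum (f := fun n (x : ℕ → Fin k) => (x n : ℝ) * (k : ℝ)⁻¹ ^ (n + 1))
    (u := fun n => (k:ℝ)⁻¹ ^ n) (fun n => ?_)
    (summable_geometric_of_lt_one (by positivity) hr1) (fun n x => ?_)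
  · exact (continuous_of_discreteTopology (α := Fin k) (f := fun d : Fin k => (d : ℝ) * (k : ℝ)⁻¹ ^ (n + 1))).comp
      (continuous_apply n)
  · have h1 : (x n : ℝ) ≤ k := by exact_mod_cast (x n).isLt.le
    rw [Real.norm_eq_abs, abs_of_nonneg (by positivity)]
    calc (x n : ℝ) * (k : ℝ)⁻¹ ^ (n + 1) ≤ (k : ℝ) * (k : ℝ)⁻¹ ^ (n + 1) :=
          mul_le_mul_of_nonneg_right h1 (by positivity)
      _ = (k : ℝ)⁻¹ ^ n := by rw [pow_succ']; field_simp

lemma measurable_bS (hk : 2 ≤ k) : Measurable (bS k) := (continuous_bS hk).measurable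

section Meas

variable (P : Measure (ℕ → Fin k))
variable (hP : ∀ (s : Finset ℕ) (a : ℕ → Fin k),
    P {x | ∀ n ∈ s, x n = a n} = ((k : ENNReal)⁻¹) ^ s.card)

include hP in
lemma cyl_measure (N : ℕ) (a : ℕ → Fin k) :
    P {x | ∀ n < N, x n = a n} = ((k : ENNReal)⁻¹) ^ N := by
  have := hP (Finset.range N) a
  simp only [Finset.mem_range, Finset.card_range] at this
  exact this

lemma cylSet_measurableSet (N : ℕ) (a : ℕ → Fin k) :
    MeasurableSet {x : ℕ → Fin k | ∀ n < N, x n = a n} := by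
  have : {x : ℕ → Fin k | ∀ n < N, x n = a n}
      = ⋂ n ∈ Set.Iio N, (fun x : ℕ → Fin k => x n) ⁻¹' {a n} := by
    ext x; simp [Set.mem_iInter]
  rw [this]
  exact MeasurableSet.biInter (Set.to_countable _)
    (fun n _ => (measurable_pi_apply n) (MeasurableSet.singleton _))

lemma bval_eq_set (hk : 2 ≤ k) (N : ℕ) {c : ℕ} (hc : c < k ^ N) :
    ∃ a : ℕ → Fin k, {x : ℕ → Fin k | bval x N = c} = {x | ∀ n < N, x n = a n} := by
  obtain ⟨a, ha⟩ := bval_surj hk N c hc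
  refine ⟨a, ?_⟩
  ext x
  simp only [Set.mem_setOf_eq]
  constructor
  · intro h
    exact bval_inj hk (h.trans ha.symm)
  · intro h
    rw [bval_congr h, ha]

include hP in
lemma measure_bval_eq (hk : 2 ≤ k) (N : ℕ) {c : ℕ} (hc : c < k ^ N) :
    P {x : ℕ → Fin k | bval x N = c} = ((k : ENNReal)⁻¹) ^ N := by
  obtain ⟨a, ha⟩ := bval_eq_set hk N hc
  rw [ha]; exact cyl_measure P hP N a

lemma measurable_bval_eq (hk : 2 ≤ k) (N : ℕ) {c : ℕ} (hc : c < k ^ N) :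
    MeasurableSet {x : ℕ → Fin k | bval x N = c} := by
  obtain ⟨a, ha⟩ := bval_eq_set (k := k) hk N hc
  rw [ha]
  exact cylSet_measurableSet N a

include hP in
lemma measure_bval_lt (hk : 2 ≤ k) (N : ℕ) {j : ℕ} (hj : j ≤ k ^ N) :
    P {x : ℕ → Fin k | bval x N < j} = j * ((k : ENNReal)⁻¹) ^ N := by
  have hU : {x : ℕ → Fin k | bval x N < j} = ⋃ c ∈ Finset.range j, {x | bval x N = c} := by
    ext x; simp [Finset.mem_range]
  rw [hU, measure_biUnion_finset ?_ (fun c hc => measurable_bval_eq hk N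
      (lt_of_lt_of_le (Finset.mem_range.mp hc) hj))]
  · rw [Finset.sum_congr rfl (fun c hc => measure_bval_eq P hP hk N
      (lt_of_lt_of_le (Finset.mem_range.mp hc) hj))]
    simp [Finset.card_range, mul_comm]
  · intro c _ c' _ hcc
    exact Set.disjoint_left.mpr (fun x hx hx' => hcc (hx.symm.trans hx'))

include hP in
lemma measure_bad (hk : 2 ≤ k) :
    P {x : ℕ → Fin k | ¬ ∀ N : ℕ, ∃ m, (x (m + N) : ℕ) + 1 < k} = 0 := by
  have hk0 : 0 < k := by omega
  set c : Fin k := ⟨k - 1, by omega⟩ with hc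
  have hsub : {x : ℕ → Fin k | ¬ ∀ N : ℕ, ∃ m, (x (m + N) : ℕ) + 1 < k}
      ⊆ ⋃ N : ℕ, {x : ℕ → Fin k | ∀ m, x (m + N) = c} := by
    intro x hx
    simp only [Set.mem_setOf_eq, not_forall, not_exists, not_lt] at hx
    obtain ⟨N, hN⟩ := hx
    refine Set.mem_iUnion.mpr ⟨N, fun m => Fin.ext ?_⟩
    have h1 := (x (m + N)).isLt
    have h2 := hN m
    show (x (m + N) : ℕ) = k - 1
    omega
  refine measure_mono_null hsub (measure_iUnion_null fun N => ?_)
  have hle : ∀ j : ℕ, P {x : ℕ → Fin k | ∀ m, x (m + N) = c} ≤ ((k : ENNReal)⁻¹) ^ j := by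
    intro j
    have hsub2 : {x : ℕ → Fin k | ∀ m, x (m + N) = c}
        ⊆ {x | ∀ n ∈ Finset.Ico N (N + j), x n = (fun _ => c) n} := by
      intro x hx n hn
      rw [Finset.mem_Ico] at hn
      have : n = (n - N) + N := by omega
      rw [this]
      exact hx _
    calc P {x : ℕ → Fin k | ∀ m, x (m + N) = c}
        ≤ P {x | ∀ n ∈ Finset.Ico N (N + j), x n = (fun _ => c) n} := measure_mono hsub2
      _ = ((k : ENNReal)⁻¹) ^ (Finset.Ico N (N + j)).card := hP _ _
      _ = ((k : ENNReal)⁻¹) ^ j := by rw [Nat.card_Ico]; congr 1; omega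
  have hq : (k : ENNReal)⁻¹ < 1 := by
    rw [ENNReal.inv_lt_one]
    exact_mod_cast (by omega : 1 < k)
  have htend := ENNReal.tendsto_pow_atTop_nhds_zero_of_lt_one hq
  exact le_antisymm (ge_of_tendsto' htend hle) zero_le

include hP in
lemma measure_bS_le (hk : 2 ≤ k) [IsProbabilityMeasure P] {t : ℝ} (ht : 0 ≤ t) (ht1 : t < 1) :
    P {x | bS k x ≤ t} = ENNReal.ofReal t := by
  have hk0 : (0:ℝ) < k := by positivity
  set q : ENNReal := (k : ENNReal)⁻¹ with hq
  set r : ℝ := (k : ℝ)⁻¹ with hr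
  have hPA : P {x | bS k x ≤ t} ≠ ⊤ := measure_ne_top _ _
  have hqR : ∀ c : ℕ, ((c : ENNReal) * q ^ c).toReal = 0 ∨ True := fun _ => Or.inr trivial
  have hqtop : ∀ N : ℕ, ∀ c : ℕ, ((c : ENNReal) * q ^ N) ≠ ⊤ := by
    intro N c
    refine ENNReal.mul_ne_top (ENNReal.natCast_ne_top c) ?_
    exact ENNReal.pow_ne_top (ENNReal.inv_ne_top.mpr (Nat.cast_ne_zero.mpr (by omega)))
  have hqRtoReal : ∀ N c : ℕ, ((c : ENNReal) * q ^ N).toReal = (c : ℝ) * r ^ N := by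
    intro N c
    rw [ENNReal.toReal_mul, ENNReal.toReal_pow]
    simp [hq, hr, ENNReal.toReal_inv]
  have key : ∀ N : ℕ, |(P {x | bS k x ≤ t}).toReal - t| ≤ r ^ N := by
    intro N
    have hkN : (0:ℝ) < (k : ℝ) ^ N := by positivity
    have hrN : r ^ N = ((k : ℝ) ^ N)⁻¹ := inv_pow _ _
    set j : ℕ := ⌊t * (k : ℝ) ^ N⌋₊ with hj
    have hjle : (j : ℝ) ≤ t * (k : ℝ) ^ N := Nat.floor_le (by positivity)
    have hjgt : t * (k : ℝ) ^ N < (j : ℝ) + 1 := Nat.lt_floor_add_one _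
    have hjlt : j < k ^ N := by
      have h5 : t * (k : ℝ) ^ N < ((k ^ N : ℕ) : ℝ) := by
        push_cast
        nlinarith
      exact Nat.floor_lt (by positivity) |>.mpr h5
    have hlow : ((j : ENNReal)) * q ^ N ≤ P {x | bS k x ≤ t} := by
      rw [← measure_bval_lt P hP hk N (le_of_lt hjlt)]
      refine measure_mono (fun x hx => ?_)
      have hx' : bval x N < j := hx
      have h1 : ((bval x N : ℝ) + 1) ≤ (j : ℝ) := by exact_mod_cast hx'
      have h2 := bS_upper hk x N
      show bS k x ≤ t
      have h3 : ((bval x N : ℝ) + 1) / (k:ℝ)^N ≤ (j : ℝ) / (k:ℝ)^N :=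
        div_le_div_of_nonneg_right h1 hkN.le
      have h4 : (j : ℝ) / (k:ℝ)^N ≤ t := (div_le_iff₀ hkN).mpr (by linarith)
      linarith
    have hhigh : P {x | bS k x ≤ t} ≤ ((j : ENNReal) + 1) * q ^ N := by
      have hcast : ((j : ENNReal) + 1) = ((j + 1 : ℕ) : ENNReal) := by push_cast; ring
      rw [hcast, ← measure_bval_lt P hP hk N (by omega)]
      refine measure_mono (fun x hx => ?_)
      have hx' : bS k x ≤ t := hx
      have h2 := bS_lower hk x N
      show bval x N < j + 1
      have h3 : (bval x N : ℝ) ≤ t * (k:ℝ)^N := by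
        rw [div_le_iff₀ hkN] at h2
        nlinarith [bS_nonneg hk x]
      have h4 : (bval x N : ℝ) < (j : ℝ) + 1 := lt_of_le_of_lt h3 hjgt
      exact_mod_cast h4
    have hlowR : (j : ℝ) * r ^ N ≤ (P {x | bS k x ≤ t}).toReal := by
      have := ENNReal.toReal_mono hPA hlow
      rwa [hqRtoReal N j] at this
    have hhighR : (P {x | bS k x ≤ t}).toReal ≤ ((j : ℝ) + 1) * r ^ N := by
      have hne : ((j : ENNReal) + 1) * q ^ N ≠ ⊤ := by
        have := hqtop N (j + 1)
        push_cast at this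
        exact this
      have h6 := ENNReal.toReal_mono hne hhigh
      have h7 : (((j : ENNReal) + 1) * q ^ N).toReal = ((j:ℝ) + 1) * r ^ N := by
        have := hqRtoReal N (j + 1)
        push_cast at this ⊢
        exact this
      rwa [h7] at h6
    have hjt1 : (j : ℝ) * r ^ N ≤ t := by
      rw [hrN]
      exact (div_eq_mul_inv (j:ℝ) _ ▸ (div_le_iff₀ hkN).mpr (by linarith))
    have hjt2 : t ≤ (j : ℝ) * r ^ N + r ^ N := by
      have : t ≤ ((j:ℝ) + 1) * r ^ N := by
        rw [hrN]
        rw [← div_eq_mul_inv]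
        exact (le_div_iff₀ hkN).mpr (by linarith)
      linarith
    exact abs_sub_le_of_squeeze hlowR (by linarith) hjt1 hjt2
  have := eq_of_dist_le_pow hk key
  rw [← ENNReal.ofReal_toReal hPA, this]

include hP in
lemma map_bS (hk : 2 ≤ k) [IsProbabilityMeasure P] :
    P.map (bS k) = (volume : Measure ℝ).restrict (Set.Ico (0:ℝ) 1) := by
  haveI : IsProbabilityMeasure (P.map (bS k)) :=
    Measure.isProbabilityMeasure_map (measurable_bS hk).aemeasurable
  refine Measure.ext_of_Iic _ _ (fun t => ?_)
  rw [Measure.map_apply (measurable_bS hk) measurableSet_Iic,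
      Measure.restrict_apply measurableSet_Iic]
  rcases lt_or_ge t 0 with ht | ht
  · have h1 : bS k ⁻¹' Iic t = ∅ := by
      ext x
      simp only [Set.mem_preimage, mem_Iic, Set.mem_empty_iff_false, iff_false, not_le]
      exact lt_of_lt_of_le ht (bS_nonneg hk x)
    have h2 : Iic t ∩ Ico (0:ℝ) 1 = ∅ := by
      ext s
      simp only [Set.mem_inter_iff, mem_Iic, mem_Ico, Set.mem_empty_iff_false, iff_false]
      rintro ⟨h3, h4, -⟩
      linarith
    rw [h1, h2]
    simp
  rcases lt_or_ge t 1 with ht1 | ht1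
  · have h1 : bS k ⁻¹' Iic t = {x | bS k x ≤ t} := rfl
    rw [h1, measure_bS_le P hP hk ht ht1]
    have h2 : Iic t ∩ Ico (0:ℝ) 1 = Icc 0 t := by
      ext s
      simp only [Set.mem_inter_iff, mem_Iic, mem_Ico, mem_Icc]
      constructor
      · rintro ⟨h3, h4, h5⟩; exact ⟨h4, h3⟩
      · rintro ⟨h3, h4⟩; exact ⟨h4, h3, by linarith⟩
    rw [h2, Real.volume_Icc]
    simp
  · have h1 : bS k ⁻¹' Iic t = Set.univ := by
      ext x
      simp only [Set.mem_preimage, mem_Iic, Set.mem_univ, iff_true]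
      exact le_trans (bS_le_one hk x) ht1
    have h2 : Iic t ∩ Ico (0:ℝ) 1 = Ico 0 1 := by
      refine Set.inter_eq_self_of_subset_right (fun s hs => ?_)
      rw [mem_Ico] at hs
      exact le_trans (le_of_lt hs.2) ht1
    rw [h1, h2, measure_univ, Real.volume_Ico]
    simp

end Meas

lemma exp_nat_mul (t : ℝ) (n : ℕ) : Circle.exp ((n : ℝ) * t) = Circle.exp t ^ n := by
  induction n with
  | zero => simp
  | succ n ih =>
    push_cast
    rw [add_mul, one_mul, Circle.exp_add, ih, pow_succ]

lemma bS_shift (hk : 2 ≤ k) (x : ℕ → Fin k) :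
    (k : ℝ) * bS k x = ((x 0 : ℕ) : ℝ) + bS k (fun n => x (n + 1)) := by
  have hk0 : (0:ℝ) < k := by positivity
  have hsum := summable_term hk x
  rw [bS, Summable.tsum_eq_zero_add hsum]
  rw [mul_add]
  congr 1
  · simp [pow_one]
    field_simp
  · rw [← tsum_mul_left]
    rw [bS]
    congr 1
    funext n
    have : (k:ℝ) * (k:ℝ)⁻¹ ^ (n + 1 + 1) = (k:ℝ)⁻¹ ^ (n + 1) := by
      rw [pow_succ' (a := (k:ℝ)⁻¹) (n := n+1)]
      field_simp
    rw [← this]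
    ring

lemma exp_fract (z : Circle) :
    Circle.exp (2 * π * Int.fract (Complex.arg ↑z / (2 * π))) = z := by
  have hpi : (2 : ℝ) * π ≠ 0 := by positivity
  rw [Int.fract]
  set d : ℝ := Complex.arg ↑z / (2 * π) with hd
  have h1 : 2 * π * (d - ↑⌊d⌋) = Complex.arg ↑z - ↑⌊d⌋ * (2 * π) := by
    rw [mul_sub, hd]
    field_simp
  rw [h1, Circle.periodic_exp.sub_int_mul_eq, Circle.exp_arg]

lemma exp_inj01 (hs : 0 ≤ s) (hs1 : s < 1) (ht : 0 ≤ t) (ht1 : t < 1)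
    (h : Circle.exp (2 * π * s) = Circle.exp (2 * π * t)) : s = t := by
  rw [Circle.exp_eq_exp] at h
  obtain ⟨m, hm⟩ := h
  have hpi : (0:ℝ) < 2 * π := by positivity
  have h2 : 2 * π * s = 2 * π * (t + m) := by rw [hm]; ring
  have h3 : s = t + m := mul_left_cancel₀ (ne_of_gt hpi) h2
  have : m = 0 := by
    have hm1 : (m : ℝ) < 1 := by linarith
    have hm2 : (-1 : ℝ) < m := by linarith
    exact_mod_cast (by
      have a1 : m < 1 := by exact_mod_cast hm1
      have a2 : -1 < m := by exact_mod_cast hm2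
      omega : m = (0:ℤ))
  rw [h3, this]
  simp

end CBA

/-- The circle with normalized Haar measure is isomorphic, as a measure space, to the
one-sided Bernoulli shift space `∏_{n ∈ ℤ₋} {0, 1, …, k-1}` (indexed here by `n : ℕ`,
with `n` corresponding to the negative integer `-(n+1)`) with the uniform product
measure (characterized by its values on cylinder sets), via the map
`(x_n)_n ↦ exp(2πi ∑_n x_n k^{-(n+1)})`; moreover, under this map the preimage of a set
under `T_k : z ↦ z ^ k` corresponds to the shift of the set. -/
theorem circle_iso_bernoulli_shift (k : ℕ) (hk : 2 ≤ k)
    (μ : Measure Circle) [μ.IsHaarMeasure] [IsProbabilityMeasure μ]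
    (P : Measure (ℕ → Fin k)) [IsProbabilityMeasure P]
    (hP : ∀ (s : Finset ℕ) (a : ℕ → Fin k),
      P {x | ∀ n ∈ s, x n = a n} = ((k : ENNReal)⁻¹) ^ s.card)
    (f : (ℕ → Fin k) → Circle)
    (hf : f = fun x => Circle.exp (2 * Real.pi * ∑' n : ℕ, (x n : ℝ) * (k : ℝ)⁻¹ ^ (n + 1))) :
    MeasurePreserving f P μ ∧
      (∃ g : Circle → ℕ → Fin k, Measurable g ∧
        (∀ᵐ x ∂P, g (f x) = x) ∧ (∀ᵐ z ∂μ, f (g z) = z)) ∧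
      (∀ x : ℕ → Fin k, f x ^ k = f (fun n => x (n + 1))) ∧
      (∀ A : Set Circle, MeasurableSet A →
        f ⁻¹' ((fun z : Circle => z ^ k) ⁻¹' A) =
          (fun (x : ℕ → Fin k) (n : ℕ) => x (n + 1)) ⁻¹' (f ⁻¹' A)) := by
  classical
  haveI hFact : Fact ((0:ℝ) < 1) := ⟨one_pos⟩
  have hk0 : (0:ℝ) < k := by positivity
  have hpi2 : (0:ℝ) < 2 * Real.pi := by positivity
  have hfS : ∀ x : ℕ → Fin k, f x = Circle.exp (2 * Real.pi * CBA.bS k x) := by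
    intro x; rw [hf]; rfl
  -- f as a composition
  have hfc : f = (AddCircle.toCircle : AddCircle (1:ℝ) → Circle) ∘
      (QuotientAddGroup.mk : ℝ → AddCircle (1:ℝ)) ∘ CBA.bS k := by
    funext x
    rw [hfS x]
    show _ = AddCircle.toCircle ((CBA.bS k x : ℝ) : AddCircle (1:ℝ))
    rw [AddCircle.toCircle_apply_mk]
    norm_num
  have hmeasS : Measurable (CBA.bS k) := CBA.measurable_bS hk
  have hmt : Measurable (AddCircle.toCircle : AddCircle (1:ℝ) → Circle) :=
    AddCircle.continuous_toCircle.measurable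
  have hmapQ : MeasurePreserving (QuotientAddGroup.mk : ℝ → AddCircle (1:ℝ))
      ((volume : Measure ℝ).restrict (Set.Ico (0:ℝ) 1)) volume := by
    rw [Measure.restrict_congr_set Ico_ae_eq_Ioc]
    simpa using AddCircle.measurePreserving_mk (T := 1) 0
  have hmq : Measurable (QuotientAddGroup.mk : ℝ → AddCircle (1:ℝ)) := hmapQ.measurable
  have hmf : Measurable f := by rw [hfc]; exact (hmt.comp hmq).comp hmeasS
  have hmapS : MeasurePreserving (CBA.bS k) P ((volume : Measure ℝ).restrict (Set.Ico (0:ℝ) 1)) :=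
    ⟨hmeasS, CBA.map_bS P hP hk⟩
  set ν : Measure Circle := Measure.map AddCircle.toCircle (volume : Measure (AddCircle (1:ℝ))) with hν
  have hmapT : MeasurePreserving (AddCircle.toCircle : AddCircle (1:ℝ) → Circle)
      (volume : Measure (AddCircle (1:ℝ))) ν := ⟨hmt, rfl⟩
  have hpres : MeasurePreserving f P ν := by
    rw [hfc]; exact (hmapT.comp hmapQ).comp hmapS
  -- ν is an invariant probability measure, hence equals μ
  haveI : IsProbabilityMeasure (volume : Measure (AddCircle (1:ℝ))) :=
    ⟨by rw [AddCircle.measure_univ]; norm_num⟩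
  haveI hνprob : IsProbabilityMeasure ν := Measure.isProbabilityMeasure_map hmt.aemeasurable
  have hsurj : Function.Surjective (AddCircle.toCircle : AddCircle (1:ℝ) → Circle) := by
    intro z
    obtain ⟨y, hy⟩ := (AddCircle.homeomorphCircle (one_ne_zero : (1:ℝ) ≠ 0)).surjective z
    exact ⟨y, by rw [← AddCircle.homeomorphCircle_apply, hy]; exact one_ne_zero⟩
  haveI hνinv : ν.IsMulLeftInvariant := by
    constructor
    intro c
    obtain ⟨y, rfl⟩ := hsurj c
    rw [hν, Measure.map_map (measurable_const_mul _) hmt]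
    have hcomp : (fun z => AddCircle.toCircle y * z) ∘ (AddCircle.toCircle : AddCircle (1:ℝ) → Circle)
        = AddCircle.toCircle ∘ (fun a => y + a) := by
      funext a
      simp [AddCircle.toCircle_add]
    rw [hcomp, ← Measure.map_map hmt (measurable_const_add y),
      (measurePreserving_add_left (volume : Measure (AddCircle (1:ℝ))) y).map_eq]
  set K₀ : TopologicalSpace.PositiveCompacts Circle := ⊤ with hK₀
  have hcoe : (K₀ : Set Circle) = Set.univ := TopologicalSpace.PositiveCompacts.coe_top
  have hμhaar : μ = Measure.haarMeasure K₀ := by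
    have h1 := Measure.haarMeasure_unique μ K₀
    rwa [show μ (K₀ : Set Circle) = 1 by rw [hcoe]; exact measure_univ, one_smul] at h1
  have hνhaar : ν = Measure.haarMeasure K₀ := by
    have h1 := Measure.haarMeasure_unique ν K₀
    rwa [show ν (K₀ : Set Circle) = 1 by rw [hcoe]; exact measure_univ, one_smul] at h1
  have hνμ : ν = μ := hνhaar.trans hμhaar.symm
  have hMP : MeasurePreserving f P μ := hνμ ▸ hpres
  have hpow : ∀ x : ℕ → Fin k, f x ^ k = f (fun n => x (n + 1)) := by
    intro x
    rw [hfS x, hfS (fun n => x (n+1)), ← CBA.exp_nat_mul]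
    have h1 : (k:ℝ) * (2 * Real.pi * CBA.bS k x)
        = ((x 0 : ℕ) : ℝ) * (2 * Real.pi) + 2 * Real.pi * CBA.bS k (fun n => x (n+1)) := by
      have h2 := CBA.bS_shift hk x
      calc (k:ℝ) * (2 * Real.pi * CBA.bS k x)
          = 2 * Real.pi * ((k:ℝ) * CBA.bS k x) := by ring
        _ = 2 * Real.pi * (((x 0 : ℕ) : ℝ) + CBA.bS k (fun n => x (n+1))) := by rw [h2]
        _ = _ := by ring
    rw [h1, Circle.exp_add]
    have h3 : Circle.exp (((x 0 : ℕ) : ℝ) * (2 * Real.pi)) = 1 := by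
      have h4 : ((x 0 : ℕ) : ℝ) * (2 * Real.pi) = (((x 0 : ℕ) : ℤ) : ℝ) * (2 * Real.pi) := by
        push_cast; ring
      rw [h4, Circle.exp_int_mul_two_pi]
    rw [h3, one_mul]
  refine ⟨hMP, ?_, hpow, ?_⟩
  · -- the a.e. inverse
    refine ⟨fun z => CBA.bD k hk (Int.fract (Complex.arg ↑z / (2 * Real.pi))), ?_, ?_, ?_⟩
    · apply measurable_pi_lambda
      intro n
      have hcont : Continuous (fun z : Circle => (z : ℂ)) := continuous_subtype_val
      have h1 : Measurable (fun z : Circle => Complex.arg ↑z) :=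
        Complex.measurable_arg.comp hcont.measurable
      have h2 : Measurable (fun z : Circle => Int.fract (Complex.arg ↑z / (2 * Real.pi))) :=
        measurable_fract.comp (h1.div_const _)
      have h3 : Measurable (fun z : Circle =>
          ⌊(Int.fract (Complex.arg ↑z / (2 * Real.pi))) * (k:ℝ) ^ (n+1)⌋₊) :=
        Nat.measurable_floor.comp (h2.mul_const _)
      exact (measurable_from_top
        (f := fun m : ℕ => (⟨m % k, Nat.mod_lt _ (by omega)⟩ : Fin k))).comp h3
    · -- g ∘ f = id a.e.
      rw [ae_iff]
      refine measure_mono_null ?_ (CBA.measure_bad P hP hk)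
      intro x hx
      simp only [Set.mem_setOf_eq] at hx ⊢
      intro hgood
      apply hx
      have hS0 : 0 ≤ CBA.bS k x := CBA.bS_nonneg hk x
      have hS1 : CBA.bS k x < 1 := CBA.bS_lt_one hk x (hgood 0)
      set s : ℝ := Int.fract (Complex.arg ↑(f x) / (2 * Real.pi)) with hs
      have hse : Circle.exp (2 * Real.pi * s) = f x := CBA.exp_fract (f x)
      have hst : s = CBA.bS k x := by
        refine CBA.exp_inj01 (Int.fract_nonneg _) (Int.fract_lt_one _) hS0 hS1 ?_
        rw [hse, hfS x]
      show CBA.bD k hk s = x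
      rw [hst]
      exact CBA.bD_bS hk x hgood
    · -- f ∘ g = id everywhere
      refine Filter.Eventually.of_forall (fun z => ?_)
      have h1 : CBA.bS k (CBA.bD k hk (Int.fract (Complex.arg ↑z / (2 * Real.pi))))
          = Int.fract (Complex.arg ↑z / (2 * Real.pi)) :=
        CBA.bS_bD hk (Int.fract_nonneg _) (Int.fract_lt_one _)
      rw [hfS, h1]
      exact CBA.exp_fract z
  · -- preimage of T_k corresponds to the shift
    intro A _
    ext x
    simp only [Set.mem_preimage]
    rw [hpow x]
end

section
/- Let T be a mixing measure-preserving transformation of a probability space (X, μ), let ε > 0, and let A ⊆ X be measurable with 0 < μ(A) < 1. Then for every m ∈ ℕ there exist positive integers l_1, …, l_m such that μ(⋃_{i=1}^m T^{-l_i}(A)) > 1 − ε − (1 − μ(A))^m. -/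
open MeasureTheory Filter

/-- If `T` is a mixing measure-preserving transformation of a probability space `(X, μ)`,
`ε > 0`, and `A` is measurable with `0 < μ A < 1`, then for every `m` there exist
positive integers `l₁, …, l_m` with `μ (⋃ i, T^{-lᵢ} A) > 1 - ε - (1 - μ A) ^ m`. -/
theorem exists_iterates_union_large_of_mixing
    {X : Type*} [MeasurableSpace X] (μ : Measure X) [IsProbabilityMeasure μ]
    (T : X → X) (hT : MeasurePreserving T μ μ)
    (hmix : ∀ A B : Set X, MeasurableSet A → MeasurableSet B →
      Tendsto (fun l : ℕ => (μ ((T^[l]) ⁻¹' A ∩ B)).toReal) atTop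
        (nhds ((μ A).toReal * (μ B).toReal)))
    (ε : ℝ) (hε : 0 < ε)
    (A : Set X) (hA : MeasurableSet A) (hA0 : 0 < μ A) (hA1 : μ A < 1) :
    ∀ m : ℕ, ∃ l : Fin m → ℕ, (∀ i, 0 < l i) ∧
      (μ (⋃ i : Fin m, (T^[l i]) ⁻¹' A)).toReal >
        1 - ε - (1 - (μ A).toReal) ^ m := by
  set a : ℝ := (μ A).toReal with ha_def
  have ha0 : 0 ≤ a := ENNReal.toReal_nonneg
  have ha1 : a < 1 := by
    have := (ENNReal.toReal_lt_toReal (measure_ne_top μ A) (by simp)).mpr hA1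
    simpa using this
  have hAc : (μ Aᶜ).toReal = 1 - a := by
    have h := measure_compl hA (measure_ne_top μ A)
    rw [h, measure_univ, ENNReal.toReal_sub_of_le hA1.le (by simp)]
    simp [ha_def]
  have hmeasIter : ∀ n : ℕ, Measurable (T^[n]) := fun n => hT.measurable.iterate n
  -- key claim about intersections of preimages of Aᶜ
  have key : ∀ m : ℕ, ∀ δ : ℝ, 0 < δ → ∃ l : Fin m → ℕ, (∀ i, 0 < l i) ∧
      (μ (⋂ i : Fin m, (T^[l i]) ⁻¹' Aᶜ)).toReal < (1 - a) ^ m + δ := by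
    intro m
    induction m with
    | zero =>
      intro δ hδ
      refine ⟨fun _ => 1, fun i => one_pos, ?_⟩
      simp [hδ]
    | succ m ih =>
      intro δ hδ
      obtain ⟨l, hlpos, hlt⟩ := ih (δ / 2) (by linarith)
      set B : Set X := ⋂ i : Fin m, (T^[l i]) ⁻¹' Aᶜ with hB_def
      have hBmeas : MeasurableSet B :=
        MeasurableSet.iInter fun i => (hmeasIter (l i)) hA.compl
      have hlim := hmix Aᶜ B hA.compl hBmeas
      have htarget : (μ Aᶜ).toReal * (μ B).toReal < (1 - a) ^ (m + 1) + δ := by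
        rw [hAc]
        have h1 : (1 - a) * (μ B).toReal ≤ (1 - a) * ((1 - a) ^ m + δ / 2) :=
          mul_le_mul_of_nonneg_left hlt.le (by linarith)
        have h2 : (1 - a) * ((1 - a) ^ m + δ / 2) ≤ (1 - a) ^ (m + 1) + δ / 2 := by
          have : (1 - a) * (δ / 2) ≤ 1 * (δ / 2) :=
            mul_le_mul_of_nonneg_right (by linarith) (by linarith)
          ring_nf
          nlinarith [pow_nonneg (by linarith : (0:ℝ) ≤ 1 - a) m]
        linarith
      have hev : ∀ᶠ n in atTop,
          (μ ((T^[n]) ⁻¹' Aᶜ ∩ B)).toReal < (1 - a) ^ (m + 1) + δ :=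
        hlim.eventually (Filter.Tendsto.eventually_lt_const htarget tendsto_id) |>.mono (fun n h => h)
      obtain ⟨n, hn1, hnlt⟩ := ((eventually_ge_atTop 1).and hev).exists
      refine ⟨(Fin.cons n l : Fin (m + 1) → ℕ), ?_, ?_⟩
      · intro i
        refine Fin.cases ?_ ?_ i
        · simpa using Nat.one_le_iff_ne_zero.mp hn1 |> Nat.pos_of_ne_zero
        · intro j; simpa using hlpos j
      · have hset : (⋂ i : Fin (m + 1), (T^[(Fin.cons n l : Fin (m + 1) → ℕ) i]) ⁻¹' Aᶜ)
            = (T^[n]) ⁻¹' Aᶜ ∩ B := by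
          ext x
          simp [Set.mem_iInter, Fin.forall_fin_succ, hB_def]
        rw [hset]
        exact hnlt
  intro m
  obtain ⟨l, hlpos, hlt⟩ := key m ε hε
  refine ⟨l, hlpos, ?_⟩
  set U : Set X := ⋃ i : Fin m, (T^[l i]) ⁻¹' A with hU_def
  have hUmeas : MeasurableSet U := MeasurableSet.iUnion fun i => (hmeasIter (l i)) hA
  have hcompl : Uᶜ = ⋂ i : Fin m, (T^[l i]) ⁻¹' Aᶜ := by
    simp [hU_def, Set.compl_iUnion, Set.preimage_compl]
  have hsum : (μ U).toReal + (μ Uᶜ).toReal = 1 := by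
    rw [← ENNReal.toReal_add (measure_ne_top μ U) (measure_ne_top μ Uᶜ),
      measure_add_measure_compl hUmeas, measure_univ, ENNReal.toReal_one]
  rw [hcompl] at hsum
  linarith
end

section
/- Let p, q be non-zero integers with |p| ≠ |q|, and for n ∈ ℕ set u_n = Σ_{i,j=1}^n e(p^i q^j) in ℓ²(ℤ), where e(m) denotes the standard basis vector at m ∈ ℤ; set v_n = u_n / ‖u_n‖₂. Let σ_k : ℓ²(ℤ) → ℓ²(ℤ) be the isometry induced by e(m) ↦ e(km) for a non-zero integer k. Then for k = p and k = q, ‖σ_k(v_n) − v_n‖₂ → 0 as n → ∞. -/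
open Filter Finset

local notation "ℋ" => lp (fun _ : ℤ => ℂ) 2

private noncomputable def ee (m : ℤ) : ℋ := lp.single 2 m (1 : ℂ)

private lemma inner_ee (a b : ℤ) :
    (inner ℂ (ee a) (ee b) : ℂ) = if a = b then 1 else 0 := by
  rw [ee, ee, lp.inner_single_left]
  by_cases h : a = b
  · subst h; simp [lp.single_apply_self]
  · simp [h, lp.single_apply_ne _ _ _ h]

private lemma normsq_sum {ι : Type*} (s : Finset ι) (f : ι → ℤ) :
    ‖∑ x ∈ s, ee (f x)‖ ^ 2
      = ∑ x ∈ s, ∑ y ∈ s, (if f x = f y then (1:ℝ) else 0) := by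
  have h : (inner ℂ (∑ x ∈ s, ee (f x)) (∑ x ∈ s, ee (f x)) : ℂ)
      = ∑ x ∈ s, ∑ y ∈ s, (if f x = f y then (1:ℂ) else 0) := by
    rw [sum_inner]
    refine Finset.sum_congr rfl fun x _ => ?_
    rw [inner_sum]
    exact Finset.sum_congr rfl fun y _ => inner_ee _ _
  have h2 := inner_self_eq_norm_sq_to_K (𝕜 := ℂ) (∑ x ∈ s, ee (f x))
  rw [h] at h2
  refine Complex.ofReal_injective ?_
  push_cast [apply_ite (Complex.ofReal)]
  exact h2.symm

private noncomputable def NN (q : ℤ) (n : ℕ) : ℝ :=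
  ∑ j ∈ Finset.Icc 1 n, ∑ j' ∈ Finset.Icc 1 n, (if q ^ j = q ^ j' then (1:ℝ) else 0)

private lemma key (p q : ℤ) (hp : p ≠ 0) (hq : q ≠ 0)
    (σ : ℋ →ₗᵢ[ℂ] ℋ)
    (hσ : ∀ m : ℤ, σ (ee m) = ee (p * m))
    (u : ℕ → ℋ)
    (hu : ∀ n, u n = ∑ ij ∈ Finset.Icc 1 n ×ˢ Finset.Icc 1 n, ee (p ^ ij.1 * q ^ ij.2)) :
    Tendsto (fun n => ‖σ ((‖u n‖)⁻¹ • u n) - (‖u n‖)⁻¹ • u n‖) atTop (nhds 0) := by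
  classical
  set N : ℕ → ℝ := NN q with hN
  set g : ℕ → ℕ → ℋ := fun n c => ∑ j ∈ Finset.Icc 1 n, ee (p ^ c * q ^ j) with hgdef
  -- norm of each "row"
  have hg : ∀ n c, ‖g n c‖ ^ 2 = N n := by
    intro n c
    rw [hgdef]
    rw [normsq_sum (Finset.Icc 1 n) (fun j => p ^ c * q ^ j)]
    refine Finset.sum_congr rfl fun j _ => Finset.sum_congr rfl fun j' _ => ?_
    congr 1
    simp only [eq_iff_iff]
    constructor
    · exact fun h => mul_left_cancel₀ (pow_ne_zero c hp) h
    · exact fun h => by rw [h]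
  have hN_ge : ∀ n : ℕ, (n : ℝ) ≤ N n := by
    intro n
    have : ∀ j ∈ Finset.Icc 1 n,
        (1:ℝ) ≤ ∑ j' ∈ Finset.Icc 1 n, (if q ^ j = q ^ j' then (1:ℝ) else 0) := by
      intro j hj
      have := Finset.single_le_sum (f := fun j' => if q ^ j = q ^ j' then (1:ℝ) else 0)
        (fun i _ => by positivity) hj
      simpa using this
    have h2 := Finset.sum_le_sum this
    simpa [hN, NN, Nat.card_Icc] using h2
  have hu_ge : ∀ n : ℕ, (n : ℝ) * N n ≤ ‖u n‖ ^ 2 := by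
    intro n
    rw [hu, normsq_sum (Finset.Icc 1 n ×ˢ Finset.Icc 1 n) (fun ij => p ^ ij.1 * q ^ ij.2)]
    have inner_bound : ∀ x ∈ Finset.Icc 1 n ×ˢ Finset.Icc 1 n,
        (∑ j' ∈ Finset.Icc 1 n, if q ^ x.2 = q ^ j' then (1:ℝ) else 0)
          ≤ ∑ y ∈ Finset.Icc 1 n ×ˢ Finset.Icc 1 n,
              (if p ^ x.1 * q ^ x.2 = p ^ y.1 * q ^ y.2 then (1:ℝ) else 0) := by
      intro x hx
      have hx1 : x.1 ∈ Finset.Icc 1 n := (Finset.mem_product.mp hx).1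
      have step1 : (∑ j' ∈ Finset.Icc 1 n, if q ^ x.2 = q ^ j' then (1:ℝ) else 0)
          = ∑ y ∈ ({x.1} : Finset ℕ) ×ˢ Finset.Icc 1 n,
              (if p ^ x.1 * q ^ x.2 = p ^ y.1 * q ^ y.2 then (1:ℝ) else 0) := by
        rw [Finset.sum_product, Finset.sum_singleton]
        refine Finset.sum_congr rfl fun j' _ => ?_
        congr 1
        simp only [eq_iff_iff]
        constructor
        · exact fun h => by rw [h]
        · exact fun h => mul_left_cancel₀ (pow_ne_zero x.1 hp) h
      rw [step1]
      refine Finset.sum_le_sum_of_subset_of_nonneg ?_ (fun y _ _ => by positivity)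
      exact Finset.product_subset_product (Finset.singleton_subset_iff.mpr hx1) le_rfl
    calc (n : ℝ) * N n
        = ∑ x ∈ Finset.Icc 1 n ×ˢ Finset.Icc 1 n,
            ∑ j' ∈ Finset.Icc 1 n, (if q ^ x.2 = q ^ j' then (1:ℝ) else 0) := by
          rw [Finset.sum_product]
          simp [hN, NN, Finset.sum_const, Nat.card_Icc, mul_comm]
      _ ≤ _ := Finset.sum_le_sum inner_bound
  have hdiff : ∀ n : ℕ, 1 ≤ n → σ (u n) - u n = g n (n+1) - g n 1 := by
    intro n hn
    have hσu : σ (u n) = ∑ i ∈ Finset.Icc 1 n, g n (i+1) := by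
      rw [hu, map_sum]
      simp_rw [hσ]
      rw [Finset.sum_product]
      refine Finset.sum_congr rfl fun i _ => Finset.sum_congr rfl fun j _ => ?_
      congr 1
      ring
    have huu : u n = ∑ i ∈ Finset.Icc 1 n, g n i := by
      rw [hu, Finset.sum_product]
    have shift : ∑ i ∈ Finset.Icc 1 n, g n (i+1) = ∑ i ∈ Finset.Icc 2 (n+1), g n i := by
      have hmap : Finset.Icc 2 (n+1) = (Finset.Icc 1 n).map (addRightEmbedding 1) := by
        rw [Finset.map_add_right_Icc]
      rw [hmap, Finset.sum_map]
      rfl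
    have htop : ∑ i ∈ Finset.Icc 2 (n+1), g n i
        = (∑ i ∈ Finset.Icc 2 n, g n i) + g n (n+1) :=
      Finset.sum_Icc_succ_top (by omega) _
    have hbot : ∑ i ∈ Finset.Icc 1 n, g n i = g n 1 + ∑ i ∈ Finset.Icc 2 n, g n i := by
      have h1 : Finset.Icc 1 n = insert 1 (Finset.Icc 2 n) := by
        ext x; simp only [Finset.mem_Icc, Finset.mem_insert]; omega
      rw [h1, Finset.sum_insert (by simp [Finset.mem_Icc])]
    rw [hσu, huu, shift, htop, hbot]
    abel
  have hgnorm : ∀ n c : ℕ, ‖g n c‖ = Real.sqrt (N n) := by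
    intro n c
    rw [← hg n c, Real.sqrt_sq (norm_nonneg _)]
  have hbound : ∀ n : ℕ, 1 ≤ n →
      ‖σ ((‖u n‖)⁻¹ • u n) - (‖u n‖)⁻¹ • u n‖ ≤ 2 / Real.sqrt n := by
    intro n hn
    have hnpos : (0:ℝ) < n := by exact_mod_cast hn
    have hNpos : (0:ℝ) < N n := lt_of_lt_of_le hnpos (hN_ge n)
    have husq : (0:ℝ) < ‖u n‖ ^ 2 :=
      lt_of_lt_of_le (by positivity) (hu_ge n)
    have hupos : (0:ℝ) < ‖u n‖ := by nlinarith [norm_nonneg (u n)]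
    have hsmul : σ ((‖u n‖)⁻¹ • u n) - (‖u n‖)⁻¹ • u n
        = (‖u n‖)⁻¹ • (σ (u n) - u n) := by
      rw [smul_sub]
      congr 1
      have h := σ.toLinearMap.map_smul_of_tower (‖u n‖)⁻¹ (u n)
      exact h
    rw [hsmul, norm_smul, Real.norm_eq_abs, abs_of_nonneg (by positivity),
      hdiff n hn]
    have h1 : ‖g n (n+1) - g n 1‖ ≤ 2 * Real.sqrt (N n) := by
      calc ‖g n (n+1) - g n 1‖ ≤ ‖g n (n+1)‖ + ‖g n 1‖ := norm_sub_le _ _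
        _ = 2 * Real.sqrt (N n) := by rw [hgnorm, hgnorm]; ring
    have h2 : Real.sqrt n * Real.sqrt (N n) ≤ ‖u n‖ := by
      have := Real.sqrt_le_sqrt (hu_ge n)
      rwa [Real.sqrt_mul (le_of_lt hnpos), Real.sqrt_sq (norm_nonneg _)] at this
    have h3 : (‖u n‖)⁻¹ ≤ (Real.sqrt n * Real.sqrt (N n))⁻¹ := by
      apply inv_anti₀ (by positivity) h2
    calc (‖u n‖)⁻¹ * ‖g n (n+1) - g n 1‖
        ≤ (Real.sqrt n * Real.sqrt (N n))⁻¹ * (2 * Real.sqrt (N n)) := by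
          apply mul_le_mul h3 h1 (norm_nonneg _) (by positivity)
      _ = 2 / Real.sqrt n := by
          field_simp
  have hsq : Tendsto (fun x : ℝ => Real.sqrt x) atTop atTop := by
    refine (tendsto_rpow_atTop (by norm_num : (0:ℝ) < 1/2)).congr' ?_
    filter_upwards [eventually_ge_atTop (0:ℝ)] with x hx
    exact (Real.sqrt_eq_rpow x).symm
  have hlim : Tendsto (fun n : ℕ => 2 / Real.sqrt n) atTop (nhds 0) :=
    tendsto_const_nhds.div_atTop (hsq.comp tendsto_natCast_atTop_atTop)
  refine squeeze_zero' (Eventually.of_forall fun n => norm_nonneg _) ?_ hlim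
  filter_upwards [eventually_ge_atTop 1] with n hn
  exact hbound n hn

/-- In `ℓ²(ℤ)` with standard basis `(e(m))`, set `u_n = ∑_{i,j=1}^n e(p^i q^j)` and
`v_n = u_n / ‖u_n‖`, where `p, q` are non-zero integers with `|p| ≠ |q|`. If `σ_k` is
the isometry with `σ_k(e(m)) = e(k m)`, then `‖σ_k(v_n) − v_n‖ → 0` for `k = p, q`. -/
theorem almost_invariant_vectors_in_l2
    (p q : ℤ) (hp : p ≠ 0) (hq : q ≠ 0) (hpq : |p| ≠ |q|)
    (e : ℤ → lp (fun _ : ℤ => ℂ) 2) (he : e = fun m => lp.single 2 m (1 : ℂ))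
    (σp σq : lp (fun _ : ℤ => ℂ) 2 →ₗᵢ[ℂ] lp (fun _ : ℤ => ℂ) 2)
    (hσp : ∀ m : ℤ, σp (e m) = e (p * m))
    (hσq : ∀ m : ℤ, σq (e m) = e (q * m))
    (u : ℕ → lp (fun _ : ℤ => ℂ) 2)
    (hu : u = fun n => ∑ ij ∈ Finset.Icc 1 n ×ˢ Finset.Icc 1 n, e (p ^ ij.1 * q ^ ij.2))
    (v : ℕ → lp (fun _ : ℤ => ℂ) 2)
    (hv : v = fun n => (‖u n‖)⁻¹ • u n) :
    Tendsto (fun n => ‖σp (v n) - v n‖) atTop (nhds 0) ∧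
      Tendsto (fun n => ‖σq (v n) - v n‖) atTop (nhds 0) := by
  subst he hv
  have hu' : ∀ n : ℕ, u n = ∑ ij ∈ Finset.Icc 1 n ×ˢ Finset.Icc 1 n, ee (p ^ ij.1 * q ^ ij.2) := by
    intro n; rw [hu]; rfl
  have hu'' : ∀ n : ℕ, u n = ∑ ij ∈ Finset.Icc 1 n ×ˢ Finset.Icc 1 n, ee (q ^ ij.1 * p ^ ij.2) := by
    intro n
    rw [hu' n, Finset.sum_product, Finset.sum_product, Finset.sum_comm]
    refine Finset.sum_congr rfl fun j _ => Finset.sum_congr rfl fun i _ => ?_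
    rw [mul_comm]
  exact ⟨key p q hp hq σp (fun m => hσp m) u hu',
    key q p hq hp σq (fun m => hσq m) u hu''⟩
end
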